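/- For any nonzero z ∈ R^N and 1 < q ≤ q' < ∞, the q-ratio sparsity is non-increasing in q: s_{q'}(z) ≤ s_q(z). Moreover s_q(z) ≤ ‖z‖₀ (the number of nonzero entries of z) and ‖z‖₁/‖z‖_∞ ≤ s_q(z). -/

import Mathlib

open Finset Matrix

noncomputable def l1 {N : ℕ} (z : Fin N → ℝ) : ℝ := ∑ i, |z i|
noncomputable def lq {N : ℕ} (q : ℝ) (z : Fin N → ℝ) : ℝ := (∑ i, |z i| ^ q) ^ (1/q)
noncomputable def l2 {m : ℕ} (v : Fin m → ℝ) : ℝ := Real.sqrt (∑ i, (v i)^2)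
noncomputable def linf {N : ℕ} (z : Fin N → ℝ) : ℝ := ⨆ i, |z i|
open scoped Classical in
noncomputable def l0 {N : ℕ} (z : Fin N → ℝ) : ℕ := (Finset.univ.filter (fun i => z i ≠ 0)).card
noncomputable def sparsityQ {N : ℕ} (q : ℝ) (z : Fin N → ℝ) : ℝ := (l1 z / lq q z) ^ (q/(q-1))
noncomputable def cmsv {m N : ℕ} (q s : ℝ) (A : Matrix (Fin m) (Fin N) ℝ) : ℝ :=
  sInf { r | ∃ z : Fin N → ℝ, z ≠ 0 ∧ sparsityQ q z ≤ s ∧ r = l2 (A.mulVec z) / lq q z }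

lemma l1_pos {N : ℕ} (z : Fin N → ℝ) (hz : z ≠ 0) : 0 < l1 z := by
  obtain ⟨i₀, hi₀⟩ : ∃ i, z i ≠ 0 := by
    by_contra h; push_neg at h; exact hz (funext h)
  exact Finset.sum_pos' (fun i _ => abs_nonneg _) ⟨i₀, Finset.mem_univ _, abs_pos.2 hi₀⟩

lemma E_pos {N : ℕ} (z : Fin N → ℝ) (hz : z ≠ 0) (p : ℝ) :
    0 < ∑ i, (|z i| / l1 z) ^ p := by
  obtain ⟨i₀, hi₀⟩ : ∃ i, z i ≠ 0 := by
    by_contra h; push_neg at h; exact hz (funext h)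
  refine Finset.sum_pos' (fun i _ => Real.rpow_nonneg (div_nonneg (abs_nonneg _) (l1_pos z hz).le) _)
    ⟨i₀, Finset.mem_univ _, Real.rpow_pos_of_pos ?_ _⟩
  exact div_pos (abs_pos.2 hi₀) (l1_pos z hz)

lemma sum_w {N : ℕ} (z : Fin N → ℝ) (hz : z ≠ 0) : ∑ i, |z i| / l1 z = 1 := by
  rw [← Finset.sum_div, ← l1, div_self (l1_pos z hz).ne']

/-- key normalization lemma -/
lemma sparsity_eq {N : ℕ} (z : Fin N → ℝ) (hz : z ≠ 0) (p : ℝ) (hp : 1 < p) :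
    sparsityQ p z = (∑ i, (|z i| / l1 z) ^ p) ^ (-(1/(p-1))) := by
  have hS := l1_pos z hz
  have hp0 : p ≠ 0 := by positivity
  have hp1 : p - 1 ≠ 0 := by intro h; nlinarith
  set w : Fin N → ℝ := fun i => |z i| / l1 z with hw
  have hwnn : ∀ i, 0 ≤ w i := fun i => div_nonneg (abs_nonneg _) hS.le
  have hE : 0 < ∑ i, w i ^ p := E_pos z hz p
  have habs : ∀ i, |z i| = l1 z * w i := fun i => by
    rw [hw]; field_simp
  have hsum : ∑ i, |z i| ^ p = l1 z ^ p * ∑ i, w i ^ p := by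
    rw [Finset.mul_sum]
    refine Finset.sum_congr rfl fun i _ => ?_
    rw [habs i, Real.mul_rpow hS.le (hwnn i)]
  have hlq : lq p z = l1 z * (∑ i, w i ^ p) ^ (1/p) := by
    rw [lq, hsum, Real.mul_rpow (by positivity) hE.le, ← Real.rpow_mul hS.le,
      mul_one_div_cancel hp0, Real.rpow_one]
  have h1 : l1 z / (l1 z * (∑ i, w i ^ p) ^ (1/p)) = (∑ i, w i ^ p) ^ (-(1/p)) := by
    rw [Real.rpow_neg hE.le, eq_comm, inv_eq_iff_eq_inv, eq_comm, inv_div]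
    rw [mul_comm, mul_div_assoc, div_self hS.ne', mul_one]
  rw [sparsityQ, hlq, h1, ← Real.rpow_mul hE.le]
  congr 1
  field_simp

lemma partA {N : ℕ} (z : Fin N → ℝ) (hz : z ≠ 0) (q q' : ℝ) (hq : 1 < q) (hqq' : q ≤ q') :
    sparsityQ q' z ≤ sparsityQ q z := by
  have hq' : 1 < q' := hq.trans_le hqq'
  rw [sparsity_eq z hz q hq, sparsity_eq z hz q' hq']
  set w : Fin N → ℝ := fun i => |z i| / l1 z with hw
  have hwnn : ∀ i, 0 ≤ w i := fun i => div_nonneg (abs_nonneg _) (l1_pos z hz).le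
  have ha : (0:ℝ) < q - 1 := by linarith
  have hb : (0:ℝ) < q' - 1 := by linarith
  have hEq : 0 < ∑ i, w i ^ q := E_pos z hz q
  have hEq' : 0 < ∑ i, w i ^ q' := E_pos z hz q'
  have hpba : 1 ≤ (q'-1)/(q-1) := (one_le_div ha).2 (by linarith)
  have h1 := Real.arith_mean_le_rpow_mean Finset.univ w (fun i => w i ^ (q-1))
    (fun i _ => hwnn i) (sum_w z hz) (fun i _ => Real.rpow_nonneg (hwnn i) _) hpba
  have e0 : ∀ r : ℝ, 1 < r → ∀ i : Fin N, w i * w i ^ (r-1) = w i ^ r := fun r hr i => by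
    rw [show r = 1 + (r-1) by ring, Real.rpow_add' (hwnn i) (by linarith), Real.rpow_one]
    ring_nf
  have e1 := e0 q hq
  have e2 : ∀ i : Fin N, w i * (w i ^ (q-1)) ^ ((q'-1)/(q-1)) = w i ^ q' := fun i => by
    rw [← Real.rpow_mul (hwnn i), mul_div_cancel₀ _ ha.ne', e0 q' hq']
  simp only [e1, e2] at h1
  rw [one_div_div] at h1
  have key : (∑ i, w i ^ q) ^ (1/(q-1)) ≤ (∑ i, w i ^ q') ^ (1/(q'-1)) := by
    calc (∑ i, w i ^ q) ^ (1/(q-1))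
        ≤ ((∑ i, w i ^ q') ^ ((q-1)/(q'-1))) ^ (1/(q-1)) :=
          Real.rpow_le_rpow hEq.le h1 (by positivity)
      _ = (∑ i, w i ^ q') ^ (1/(q'-1)) := by
          rw [← Real.rpow_mul hEq'.le]; congr 1; field_simp
  rw [Real.rpow_neg hEq.le, Real.rpow_neg hEq'.le]
  exact inv_anti₀ (Real.rpow_pos_of_pos hEq _) key

open scoped Classical in
lemma partB {N : ℕ} (z : Fin N → ℝ) (hz : z ≠ 0) (q : ℝ) (hq : 1 < q) :
    sparsityQ q z ≤ (l0 z : ℝ) := by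
  obtain ⟨i₀, hi₀⟩ : ∃ i, z i ≠ 0 := by
    by_contra h; push_neg at h; exact hz (funext h)
  rw [sparsity_eq z hz q hq]
  set w : Fin N → ℝ := fun i => |z i| / l1 z with hw
  have hwnn : ∀ i, 0 ≤ w i := fun i => div_nonneg (abs_nonneg _) (l1_pos z hz).le
  set T : Finset (Fin N) := Finset.univ.filter (fun i => z i ≠ 0) with hT
  have hcard : T.card = l0 z := by rw [l0]
  have hspos : 0 < (l0 z : ℝ) := by
    have : 0 < T.card := Finset.card_pos.2 ⟨i₀, by simp [hT, hi₀]⟩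
    rw [hcard] at this; exact_mod_cast this
  set s : ℝ := (l0 z : ℝ)
  have hwz : ∀ i ∉ T, w i = 0 := fun i hi => by
    simp only [hT, Finset.mem_filter, Finset.mem_univ, true_and, not_not] at hi
    simp [hw, hi]
  have hsumT : ∑ i ∈ T, w i = 1 := by
    rw [Finset.sum_subset (Finset.subset_univ T) (fun i _ hi => hwz i hi)]
    exact sum_w z hz
  have hsumTq : ∑ i ∈ T, w i ^ q = ∑ i, w i ^ q := by
    refine Finset.sum_subset (Finset.subset_univ T) (fun i _ hi => ?_)
    rw [hwz i hi, Real.zero_rpow (by positivity)]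
  have hE : 0 < ∑ i, w i ^ q := E_pos z hz q
  have hsum' : ∑ _i ∈ T, s⁻¹ = 1 := by
    rw [Finset.sum_const, hcard, nsmul_eq_mul]
    exact mul_inv_cancel₀ hspos.ne'
  have h2 := Real.rpow_arith_mean_le_arith_mean_rpow T (fun _ => s⁻¹) (fun i => s * w i)
    (fun i _ => by positivity) hsum' (fun i _ => mul_nonneg hspos.le (hwnn i)) hq.le
  have e3 : ∀ i : Fin N, s⁻¹ * (s * w i) = w i := fun i => by
    field_simp
  have e4 : ∀ i : Fin N, s⁻¹ * (s * w i) ^ q = s⁻¹ * s ^ q * w i ^ q := fun i => by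
    rw [Real.mul_rpow hspos.le (hwnn i)]; ring
  simp only [e3, e4] at h2
  rw [hsumT, Real.one_rpow, ← Finset.mul_sum, hsumTq] at h2
  have hEl : s ^ (1-q) ≤ ∑ i, w i ^ q := by
    have hss : s⁻¹ * s ^ q = s ^ (q-1) := by
      rw [show q - 1 = -1 + q by ring, Real.rpow_add hspos, Real.rpow_neg_one]
    rw [hss] at h2
    have h3 : s ^ (1-q) * 1 ≤ s ^ (1-q) * (s ^ (q-1) * ∑ i, w i ^ q) :=
      mul_le_mul_of_nonneg_left h2 (Real.rpow_nonneg hspos.le _)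
    rwa [mul_one, ← mul_assoc, ← Real.rpow_add hspos, show 1 - q + (q-1) = 0 by ring,
      Real.rpow_zero, one_mul] at h3
  calc (∑ i, w i ^ q) ^ (-(1/(q-1)))
      ≤ (s ^ (1-q)) ^ (-(1/(q-1))) :=
        Real.rpow_le_rpow_of_nonpos (Real.rpow_pos_of_pos hspos _) hEl
          (by have h0 : (0:ℝ) < q - 1 := by linarith
              rw [neg_nonpos]; positivity)
    _ = s := by
        have hq1 : q - 1 ≠ 0 := sub_ne_zero.2 hq.ne'
        rw [← Real.rpow_mul hspos.le, show (1-q) * (-(1/(q-1))) = 1 by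
          field_simp; ring, Real.rpow_one]

lemma partC {N : ℕ} (z : Fin N → ℝ) (hz : z ≠ 0) (q : ℝ) (hq : 1 < q) :
    l1 z / linf z ≤ sparsityQ q z := by
  obtain ⟨i₀, hi₀⟩ : ∃ i, z i ≠ 0 := by
    by_contra h; push_neg at h; exact hz (funext h)
  rw [sparsity_eq z hz q hq]
  have hS := l1_pos z hz
  set w : Fin N → ℝ := fun i => |z i| / l1 z with hw
  have hwnn : ∀ i, 0 ≤ w i := fun i => div_nonneg (abs_nonneg _) hS.le
  have hbdd : BddAbove (Set.range fun i => |z i|) := (Set.finite_range _).bddAbove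
  have hzM : ∀ i, |z i| ≤ linf z := fun i => le_ciSup hbdd i
  have hMpos : 0 < linf z := lt_of_lt_of_le (abs_pos.2 hi₀) (hzM i₀)
  set Mw : ℝ := linf z / l1 z with hMw
  have hMwpos : 0 < Mw := div_pos hMpos hS
  have hwM : ∀ i, w i ≤ Mw := fun i => by
    show |z i| / l1 z ≤ linf z / l1 z
    gcongr
    exact hzM i
  have hE : 0 < ∑ i, w i ^ q := E_pos z hz q
  have hEle : ∑ i, w i ^ q ≤ Mw ^ (q-1) := by
    calc ∑ i, w i ^ q = ∑ i, w i * w i ^ (q-1) := by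
          refine Finset.sum_congr rfl fun i _ => ?_
          have h := Real.rpow_add' (hwnn i) (show (1:ℝ) + (q-1) ≠ 0 by linarith)
          simpa [Real.rpow_one, show (1:ℝ) + (q-1) = q by ring] using h
      _ ≤ ∑ i, w i * Mw ^ (q-1) := by
          refine Finset.sum_le_sum fun i _ => ?_
          exact mul_le_mul_of_nonneg_left
            (Real.rpow_le_rpow (hwnn i) (hwM i) (by linarith)) (hwnn i)
      _ = Mw ^ (q-1) := by rw [← Finset.sum_mul, sum_w z hz, one_mul]
  calc l1 z / linf z = (Mw ^ (q-1)) ^ (-(1/(q-1))) := by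
        have hq1 : q - 1 ≠ 0 := sub_ne_zero.2 hq.ne'
        rw [← Real.rpow_mul hMwpos.le, show (q-1) * (-(1/(q-1))) = -1 by
          field_simp, Real.rpow_neg_one, hMw, inv_div]
    _ ≤ (∑ i, w i ^ q) ^ (-(1/(q-1))) :=
        Real.rpow_le_rpow_of_nonpos hE hEle
          (by have h0 : (0:ℝ) < q - 1 := by linarith
              rw [neg_nonpos]; positivity)

theorem stmt2 {N : ℕ} (z : Fin N → ℝ) (hz : z ≠ 0) (q q' : ℝ) (hq : 1 < q) (hqq' : q ≤ q') :
    sparsityQ q' z ≤ sparsityQ q z ∧ sparsityQ q z ≤ (l0 z : ℝ) ∧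
      l1 z / linf z ≤ sparsityQ q z :=
  ⟨partA z hz q q' hq hqq', partB z hz q hq, partC z hz q hq⟩
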